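/- Let M ≥ 1 be an integer, α a real with 0 < α < 1, n₁, n₂ ≥ M integers, t₁, t₂ ≥ 0 reals, 1 ≤ j ≤ M an integer and x₂ ∈ ℤ. Then the sum ∑_{x₁∈ℤ} Q^{n₁,t₁}_{n₁-j,−1}(x₁) · [∑_{k=1}^{M} Ψ^{n₁,t₁}_{n₁-k}(x₁)·Φ^{n₂,t₂}_{n₂-k}(x₂)] converges absolutely and equals 0. -/

import Mathlib

open Complex Real MeasureTheory

noncomputable section

/-- `Ψ^{n,t}_{n-j}(x)` for `1 ≤ j ≤ M`: circle `|w| = 2` (value independent of `R > 1`). -/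
def Psi (M : ℕ) (α : ℝ) (n j : ℕ) (t : ℝ) (x : ℤ) : ℂ :=
  (2 * (π : ℂ) * I)⁻¹ * ∮ w in C((0 : ℂ), 2),
    w⁻¹ * (w * (w - 1)) ^ ((n : ℤ) - (M : ℤ)) *
      (w * (w - (α : ℂ))) ^ ((M : ℤ) - (j : ℤ)) * Complex.exp ((t : ℂ) * w) *
      w ^ (-(x + 2 * (n : ℤ) - 2 * (M : ℤ)))

/-- Integrand of the double contour integrals defining `Φ^{n,t}_{n-j}` and `Q^{n,t}_{n-j,c}`. -/
def qInt (M : ℕ) (α : ℝ) (n j : ℕ) (t : ℝ) (x : ℤ) (v z : ℂ) : ℂ :=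
  (1 + 2 * z) * (2 * v + 2 - (α : ℂ)) / ((z - v) * (z + v + 1)) *
    (1 + z) ^ (x + 2 * (n : ℤ) - 2 * (M : ℤ)) * Complex.exp (-((t : ℂ) * (z + 1))) *
    (z * (1 + z)) ^ (-((n : ℤ) - (M : ℤ))) *
    ((v + 1) * (v + 1 - (α : ℂ))) ^ (-((M : ℤ) - (j : ℤ) + 1))

/-- `Φ^{n,t}_{n-j}(x)` for `1 ≤ j ≤ M`: the `v`-contour encloses exactly `α-1` and the
`z`-contour encloses exactly `0` and `v`. -/
def Phi (M : ℕ) (α : ℝ) (n j : ℕ) (t : ℝ) (rv rz : ℝ) (x : ℤ) : ℂ :=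
  (2 * (π : ℂ) * I)⁻¹ * ∮ v in C((α : ℂ) - 1, rv),
    (2 * (π : ℂ) * I)⁻¹ *
      ((∮ z in C((0 : ℂ), rz), qInt M α n j t x v z) +
       (∮ z in C(v, rz), qInt M α n j t x v z))

/-- `Q^{n,t}_{n-j,c}(x)` for a constant point `c`: the `z`-contour encloses exactly `c`. -/
def Qpt (M : ℕ) (α : ℝ) (n j : ℕ) (t : ℝ) (rv rz : ℝ) (c : ℂ) (x : ℤ) : ℂ :=
  (2 * (π : ℂ) * I)⁻¹ * ∮ v in C((α : ℂ) - 1, rv),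
    (2 * (π : ℂ) * I)⁻¹ * ∮ z in C(c, rz), qInt M α n j t x v z

lemma pow_helper (w : ℂ) (hw : w ≠ 0) (a b : ℕ) (c : ℤ) (hc : 0 ≤ -1 + a + b + c)
    (u v E : ℂ) :
    w⁻¹ * (w * u) ^ (a : ℤ) * (w * v) ^ (b : ℤ) * E * w ^ c
      = w ^ ((-1 + a + b + c).toNat) * u ^ a * v ^ b * E := by
  have h := Int.toNat_of_nonneg hc
  rw [mul_zpow, mul_zpow, ← zpow_natCast w ((-1 + (a:ℤ) + b + c).toNat), h,
    zpow_add₀ hw, zpow_add₀ hw, zpow_add₀ hw, zpow_neg_one,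
    zpow_natCast, zpow_natCast, zpow_natCast, zpow_natCast]
  ring

lemma psi_eq_zero (M : ℕ) (α : ℝ) (n k : ℕ) (t : ℝ) (x : ℤ)
    (hn : M ≤ n) (hk : k ≤ M) (hx : x + n + k + 1 ≤ 2 * M) :
    Psi M α n k t x = 0 := by
  set A : ℕ := (-1 + ((n - M : ℕ) : ℤ) + ((M - k : ℕ) : ℤ)
      + (-(x + 2 * (n : ℤ) - 2 * (M : ℤ)))).toNat with hA
  set g : ℂ → ℂ := fun w =>
    w ^ A * (w - 1) ^ (n - M) * (w - (α : ℂ)) ^ (M - k) * Complex.exp ((t : ℂ) * w)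
    with hg
  have hnonneg : (0:ℤ) ≤ -1 + ((n - M : ℕ) : ℤ) + ((M - k : ℕ) : ℤ)
      + (-(x + 2 * (n : ℤ) - 2 * (M : ℤ))) := by omega
  have hcongr : (∮ w in C((0:ℂ), 2),
      w⁻¹ * (w * (w - 1)) ^ ((n : ℤ) - (M : ℤ)) *
        (w * (w - (α : ℂ))) ^ ((M : ℤ) - (k : ℤ)) * Complex.exp ((t : ℂ) * w) *
        w ^ (-(x + 2 * (n : ℤ) - 2 * (M : ℤ)))) = ∮ w in C((0:ℂ), 2), g w := by
    refine circleIntegral.integral_congr (by norm_num) fun w hw => ?_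
    have hw0 : w ≠ 0 := by
      intro h
      rw [Metric.mem_sphere, h] at hw
      norm_num at hw
    have e1 : (n : ℤ) - (M : ℤ) = ((n - M : ℕ) : ℤ) := by omega
    have e2 : (M : ℤ) - (k : ℤ) = ((M - k : ℕ) : ℤ) := by omega
    rw [e1, e2, pow_helper w hw0 (n - M) (M - k) _ hnonneg]
  have hgdiff : Differentiable ℂ g := by
    have : Differentiable ℂ fun w : ℂ => Complex.exp ((t : ℂ) * w) := by fun_prop
    exact (((differentiable_pow A).mul ((differentiable_id.sub_const 1).pow _)).mul
      ((differentiable_id.sub_const _).pow _)).mul this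
  rw [Psi, hcongr, Complex.circleIntegral_eq_zero_of_differentiable_on_off_countable
    (by norm_num) Set.countable_empty hgdiff.continuous.continuousOn
    (fun z _ => hgdiff z), mul_zero]

lemma qpt_eq_zero (M : ℕ) (α : ℝ) (n j : ℕ) (t : ℝ) (rv rz : ℝ) (x : ℤ)
    (hα0 : 0 < α) (hα1 : α < 1) (hn : M ≤ n) (hx : (M : ℤ) - n ≤ x)
    (hrv : 0 < rv) (hrz : 0 < rz)
    (h1 : rv + rz < α) (h2 : rv + rz < 1 - α) (h3 : rz < 1) :
    Qpt M α n j t rv rz (-1) x = 0 := by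
  have hvint : ∀ v ∈ Metric.sphere ((α:ℂ) - 1) rv,
      (∮ z in C((-1:ℂ), rz), qInt M α n j t x v z) = 0 := by
    intro v hv
    have hvnorm : ‖v - ((α:ℂ) - 1)‖ = rv := by
      simpa [dist_eq_norm] using (Metric.mem_sphere.mp hv)
    set E : ℕ := (x + n - M).toNat with hEdef
    have hEcast : (E : ℤ) = x + (n : ℤ) - M := Int.toNat_of_nonneg (by omega)
    set h : ℂ → ℂ := fun z =>
      (1 + 2 * z) * (2 * v + 2 - (α : ℂ)) / ((z - v) * (z + v + 1)) *
        ((1 + z) ^ E * Complex.exp (-((t : ℂ) * (z + 1))) * z ^ (-((n : ℤ) - (M : ℤ)))) *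
        ((v + 1) * (v + 1 - (α : ℂ))) ^ (-((M : ℤ) - (j : ℤ) + 1)) with hh
    -- facts about the closed ball
    have hball : ∀ z ∈ Metric.closedBall (-1:ℂ) rz,
        z ≠ 0 ∧ z - v ≠ 0 ∧ z + v + 1 ≠ 0 := by
      intro z hz
      have hz1 : ‖z + 1‖ ≤ rz := by
        simpa [dist_eq_norm, sub_neg_eq_add] using (Metric.mem_closedBall.mp hz)
      refine ⟨?_, ?_, ?_⟩
      · intro h0
        rw [h0] at hz1
        norm_num at hz1
        linarith
      · intro h0
        have key : (α:ℂ) = (z + 1) - (v - ((α:ℂ) - 1)) := by linear_combination -h0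
        have hle := norm_sub_le (z + 1) (v - ((α:ℂ) - 1))
        rw [← key] at hle
        rw [Complex.norm_real] at hle
        rw [Real.norm_eq_abs, abs_of_pos hα0] at hle
        linarith [hle, hz1, hvnorm.le, hvnorm.ge]
      · intro h0
        have key : ((1 - α : ℝ) : ℂ) = (z + 1) + (v - ((α:ℂ) - 1)) := by
          push_cast
          linear_combination -h0
        have hle := norm_add_le (z + 1) (v - ((α:ℂ) - 1))
        rw [← key] at hle
        rw [Complex.norm_real, Real.norm_eq_abs, abs_of_pos (by linarith)] at hle
        linarith [hle, hz1, hvnorm.le]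
    have hcong : Set.EqOn (qInt M α n j t x v) h (Metric.sphere (-1:ℂ) rz) := by
      intro z hz
      have hz1 : ‖z + 1‖ = rz := by
        simpa [dist_eq_norm, sub_neg_eq_add] using (Metric.mem_sphere.mp hz)
      have h1z : (1 : ℂ) + z ≠ 0 := by
        intro h0
        rw [show z + 1 = 1 + z from by ring, h0] at hz1
        simp at hz1
        exact hrz.ne hz1
      have hpow : (1 + z) ^ (x + 2 * (n : ℤ) - 2 * (M : ℤ))
          = (1 + z) ^ E * (1 + z) ^ ((n : ℤ) - (M : ℤ)) := by
        rw [show x + 2 * (n : ℤ) - 2 * (M : ℤ) = (E : ℤ) + ((n : ℤ) - (M : ℤ)) from by omega,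
          zpow_add₀ h1z, zpow_natCast]
      have hone : ((1:ℂ) + z) ^ ((n : ℤ) - (M : ℤ)) * (1 + z) ^ (-((n : ℤ) - (M : ℤ))) = 1 := by
        rw [← zpow_add₀ h1z]
        simp
      simp only [qInt, hh, hpow]
      rw [mul_zpow z (1 + z) (-((n : ℤ) - (M : ℤ)))]
      linear_combination ((1 + 2 * z) * (2 * v + 2 - (α : ℂ)) / ((z - v) * (z + v + 1)) *
        (1 + z) ^ E * Complex.exp (-((t : ℂ) * (z + 1))) * z ^ (-((n : ℤ) - (M : ℤ))) *
        ((v + 1) * (v + 1 - (α : ℂ))) ^ (-((M : ℤ) - (j : ℤ) + 1))) * hone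
    rw [circleIntegral.integral_congr hrz.le hcong]
    have hd : ∀ z ∈ Metric.closedBall (-1:ℂ) rz, DifferentiableAt ℂ h z := by
      intro z hz
      obtain ⟨hz0, hzv, hzv1⟩ := hball z hz
      have d1 : DifferentiableAt ℂ (fun z : ℂ => (1 + 2 * z) * (2 * v + 2 - (α : ℂ))) z := by
        fun_prop
      have d2 : DifferentiableAt ℂ (fun z : ℂ => (z - v) * (z + v + 1)) z := by fun_prop
      have d3 : DifferentiableAt ℂ
          (fun z : ℂ => (1 + z) ^ E * Complex.exp (-((t : ℂ) * (z + 1)))) z := by fun_prop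
      have d5 : DifferentiableAt ℂ (fun z : ℂ => z ^ (-((n : ℤ) - (M : ℤ)))) z :=
        differentiableAt_zpow.mpr (Or.inl hz0)
      exact (((d1.div d2 (mul_ne_zero hzv hzv1)).mul (d3.mul d5))).mul_const _
    exact Complex.circleIntegral_eq_zero_of_differentiable_on_off_countable hrz.le
      Set.countable_empty (fun z hz => (hd z hz).continuousAt.continuousWithinAt)
      (fun z hz => hd z (Metric.ball_subset_closedBall hz.1))
  have houter : (∮ v in C((α:ℂ) - 1, rv),
      (2 * (π : ℂ) * I)⁻¹ * ∮ z in C((-1:ℂ), rz), qInt M α n j t x v z)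
      = ∮ v in C((α:ℂ) - 1, rv), (0 : ℂ) :=
    circleIntegral.integral_congr hrv.le fun v hv => by rw [hvint v hv, mul_zero]
  rw [Qpt, houter]
  simp [circleIntegral]

/-- `∑_{x₁∈ℤ} Q^{n₁,t₁}_{n₁-j,-1}(x₁) K^{(2)}((n₁,t₁),x₁;(n₂,t₂),x₂) = 0`
with absolute convergence. -/
theorem Q_K2_relation
    (M : ℕ) (hM : 1 ≤ M) (α : ℝ) (hα0 : 0 < α) (hα1 : α < 1)
    (n₁ n₂ : ℕ) (hn₁ : M ≤ n₁) (hn₂ : M ≤ n₂)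
    (t₁ t₂ : ℝ) (ht₁ : 0 ≤ t₁) (ht₂ : 0 ≤ t₂)
    (j : ℕ) (hj1 : 1 ≤ j) (hjM : j ≤ M) (x₂ : ℤ) :
    ∃ ε > 0, ∀ rv rz rv' rz' : ℝ,
      0 < rv → rv < ε → 0 < rz → rz < ε → 0 < rz' → rz' < rv' → rv' < ε →
      Summable (fun x₁ : ℤ => ‖Qpt M α n₁ j t₁ rv rz (-1) x₁ *
          ∑ k ∈ Finset.Icc 1 M, Psi M α n₁ k t₁ x₁ * Phi M α n₂ k t₂ rv' rz' x₂‖) ∧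
      (∑' x₁ : ℤ, Qpt M α n₁ j t₁ rv rz (-1) x₁ *
          ∑ k ∈ Finset.Icc 1 M, Psi M α n₁ k t₁ x₁ * Phi M α n₂ k t₂ rv' rz' x₂) = 0 := by
  refine ⟨min (α / 2) ((1 - α) / 2), lt_min (by linarith) (by linarith), ?_⟩
  intro rv rz rv' rz' hrv hrvε hrz hrzε hrz' hrr hrv'ε
  have hεα : min (α / 2) ((1 - α) / 2) ≤ α / 2 := min_le_left _ _
  have hεα' : min (α / 2) ((1 - α) / 2) ≤ (1 - α) / 2 := min_le_right _ _
  have key : ∀ x₁ : ℤ, Qpt M α n₁ j t₁ rv rz (-1) x₁ *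
      ∑ k ∈ Finset.Icc 1 M, Psi M α n₁ k t₁ x₁ * Phi M α n₂ k t₂ rv' rz' x₂ = 0 := by
    intro x₁
    rcases le_or_gt ((M : ℤ) - n₁) x₁ with hx | hx
    · rw [qpt_eq_zero M α n₁ j t₁ rv rz x₁ hα0 hα1 hn₁ hx hrv hrz
        (by linarith) (by linarith) (by linarith), zero_mul]
    · have hsum : ∑ k ∈ Finset.Icc 1 M, Psi M α n₁ k t₁ x₁ * Phi M α n₂ k t₂ rv' rz' x₂
          = 0 := by
        refine Finset.sum_eq_zero fun k hk => ?_
        obtain ⟨hk1, hkM⟩ := Finset.mem_Icc.mp hk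
        rw [psi_eq_zero M α n₁ k t₁ x₁ hn₁ hkM (by omega), zero_mul]
      rw [hsum, mul_zero]
  constructor
  · simp only [key, norm_zero]
    exact summable_zero
  · simp only [key, tsum_zero]
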